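/- Let a > 0, B > 0, k > 0 with k ≠ B, and suppose there exists a nonzero function φ ∈ C²([0,a]) satisfying φ''(u) = k²·φ(u) for all u ∈ [0,a], φ'(0) = -B·φ(0), and φ(a) = 0. Then exp(2*k*a) = (B + k)/(B - k); equivalently, if moreover 0 < k < B, then 2*a*k + log(B - k) - log(B + k) = 0. -/

import Mathlib

theorem robin_dirichlet_spectral_condition (a B k : ℝ) (ha : 0 < a) (hB : 0 < B)
    (hk : 0 < k) (hkB : k ≠ B) (φ : ℝ → ℝ) (hφ : ContDiff ℝ 2 φ)
    (hne : ∃ u ∈ Set.Icc 0 a, φ u ≠ 0)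
    (hode : ∀ u ∈ Set.Icc 0 a, deriv (deriv φ) u = k ^ 2 * φ u)
    (hbc0 : deriv φ 0 = -B * φ 0) (hbca : φ a = 0) :
    Real.exp (2 * k * a) = (B + k) / (B - k) ∧
    (k < B → 2 * a * k + Real.log (B - k) - Real.log (B + k) = 0) := by
  have hφd : Differentiable ℝ φ := hφ.differentiable (by norm_num)
  have hφ2 : ContDiff ℝ ((1:ℕ) + 1) φ := by exact_mod_cast hφ
  have hφ1 : ContDiff ℝ 1 (deriv φ) := (contDiff_succ_iff_deriv.mp hφ2).2.2
  have hφd2 : Differentiable ℝ (deriv φ) := hφ1.differentiable one_ne_zero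
  -- F u = (φ' - kφ) e^{ku}, G u = (φ' + kφ) e^{-ku}
  set F : ℝ → ℝ := fun u => (deriv φ u - k * φ u) * Real.exp (k * u) with hF
  set G : ℝ → ℝ := fun u => (deriv φ u + k * φ u) * Real.exp (-(k * u)) with hG
  have hEd : ∀ u : ℝ, HasDerivAt (fun u => Real.exp (k * u)) (Real.exp (k * u) * k) u := by
    intro u
    have : HasDerivAt (fun u : ℝ => k * u) (k * 1) u := (hasDerivAt_id u).const_mul k
    simpa using this.exp
  have hEd' : ∀ u : ℝ, HasDerivAt (fun u => Real.exp (-(k * u))) (Real.exp (-(k * u)) * (-k)) u := by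
    intro u
    have : HasDerivAt (fun u : ℝ => -(k * u)) (-(k * 1)) u := ((hasDerivAt_id u).const_mul k).neg
    simpa using this.exp
  have hFd : ∀ u ∈ Set.Icc 0 a, HasDerivAt F 0 u := by
    intro u hu
    have h1 : HasDerivAt (fun u => deriv φ u - k * φ u)
        (deriv (deriv φ) u - k * deriv φ u) u :=
      ((hφd2 u).hasDerivAt).sub (((hφd u).hasDerivAt).const_mul k)
    have := h1.mul (hEd u)
    refine this.congr_deriv ?_
    rw [hode u hu]; ring
  have hGd : ∀ u ∈ Set.Icc 0 a, HasDerivAt G 0 u := by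
    intro u hu
    have h1 : HasDerivAt (fun u => deriv φ u + k * φ u)
        (deriv (deriv φ) u + k * deriv φ u) u :=
      ((hφd2 u).hasDerivAt).add (((hφd u).hasDerivAt).const_mul k)
    have := h1.mul (hEd' u)
    refine this.congr_deriv ?_
    rw [hode u hu]; ring
  have hFc : ∀ x ∈ Set.Icc 0 a, F x = F 0 :=
    constant_of_has_deriv_right_zero
      (fun x hx => (hFd x hx).continuousAt.continuousWithinAt)
      (fun x hx => (hFd x (Set.Ico_subset_Icc_self hx)).hasDerivWithinAt) 
  have hGc : ∀ x ∈ Set.Icc 0 a, G x = G 0 :=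
    constant_of_has_deriv_right_zero
      (fun x hx => (hGd x hx).continuousAt.continuousWithinAt)
      (fun x hx => (hGd x (Set.Ico_subset_Icc_self hx)).hasDerivWithinAt)
  have hmem : a ∈ Set.Icc (0:ℝ) a := Set.right_mem_Icc.2 ha.le
  have hF0 : F 0 = -(B + k) * φ 0 := by simp [hF, hbc0]; ring
  have hG0 : G 0 = -(B - k) * φ 0 := by simp [hG, hbc0]; ring
  have hFa : F a = deriv φ a * Real.exp (k * a) := by simp [hF, hbca]
  have hGa : G a = deriv φ a * Real.exp (-(k * a)) := by simp [hG, hbca]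
  have hp : φ 0 ≠ 0 := by
    intro hp0
    obtain ⟨u, hu, hune⟩ := hne
    apply hune
    have hFu : F u = 0 := by rw [hFc u hu, hF0, hp0]; ring
    have hGu : G u = 0 := by rw [hGc u hu, hG0, hp0]; ring
    have e1 : deriv φ u - k * φ u = 0 := by
      simp only [hF] at hFu
      exact (mul_eq_zero.mp hFu).resolve_right (Real.exp_ne_zero _)
    have e2 : deriv φ u + k * φ u = 0 := by
      simp only [hG] at hGu
      exact (mul_eq_zero.mp hGu).resolve_right (Real.exp_ne_zero _)
    nlinarith [hk]
  have eq1 : deriv φ a * Real.exp (k * a) = -(B + k) * φ 0 := by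
    rw [← hFa, hFc a hmem, hF0]
  have eq2 : deriv φ a * Real.exp (-(k * a)) = -(B - k) * φ 0 := by
    rw [← hGa, hGc a hmem, hG0]
  have hBk : B - k ≠ 0 := sub_ne_zero.2 (Ne.symm hkB)
  have hBk' : B + k ≠ 0 := by positivity
  have hD : deriv φ a = -(B - k) * φ 0 * Real.exp (k * a) := by
    have h := congrArg (· * Real.exp (k * a)) eq2
    rw [mul_assoc, ← Real.exp_add] at h
    have h0 : -(k * a) + k * a = 0 := by ring
    rwa [h0, Real.exp_zero, mul_one] at h
  have h2 : Real.exp (k * a) * Real.exp (k * a) = Real.exp (2 * k * a) := by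
    rw [← Real.exp_add]; ring_nf
  have key : (B - k) * Real.exp (2 * k * a) = B + k := by
    have h := eq1
    rw [hD] at h
    have h3 : ((B - k) * Real.exp (2 * k * a)) * φ 0 = (B + k) * φ 0 := by
      linear_combination -h - (B - k) * φ 0 * h2
    exact mul_right_cancel₀ hp h3
  have main : Real.exp (2 * k * a) = (B + k) / (B - k) := by
    field_simp
    linear_combination key
  refine ⟨main, fun hlt => ?_⟩
  have hBkpos : 0 < B - k := sub_pos.2 hlt
  have := congrArg Real.log main
  rw [Real.log_exp, Real.log_div hBk' hBk] at this
  linarith
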